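/- Let d ≥ 1 and let ψ : Fin d² → ℂᵈ be unit vectors satisfying |⟨ψ_ξ, ψ_ζ⟩|² = (d·δ_{ξζ} + 1)/(d + 1) for all ξ, ζ. Then for every d×d Hermitian complex matrix ρ with tr ρ = 1, ρ = ∑_ξ (⟨ψ_ξ, ρ ψ_ξ⟩/d) · ((d+1)·|ψ_ξ⟩⟨ψ_ξ| − I), where |ψ_ξ⟩⟨ψ_ξ| denotes the rank-one matrix ψ_ξ ψ_ξᴴ. -/

import Mathlib

open Matrix
open scoped BigOperators

lemma trace_vmv_mul {d : ℕ} (u : Fin d → ℂ) (A : Matrix (Fin d) (Fin d) ℂ) :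
    (vecMulVec u (star u) * A).trace = star u ⬝ᵥ (A *ᵥ u) := by
  simp only [Matrix.trace, Matrix.diag, Matrix.mul_apply, vecMulVec_apply, dotProduct,
    mulVec, Finset.mul_sum, Pi.star_apply]
  rw [Finset.sum_comm]
  exact Finset.sum_congr rfl fun j _ => Finset.sum_congr rfl fun i _ => by ring

lemma trace_vmv {d : ℕ} (u : Fin d → ℂ) :
    (vecMulVec u (star u)).trace = star u ⬝ᵥ u := by
  simp [Matrix.trace, Matrix.diag, vecMulVec_apply, dotProduct, mul_comm]

lemma vmv_mulVec {d : ℕ} (u v x : Fin d → ℂ) :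
    vecMulVec u v *ᵥ x = (v ⬝ᵥ x) • u := by
  ext i
  simp [mulVec, vecMulVec_apply, dotProduct, Finset.mul_sum, Finset.sum_mul, mul_comm, mul_assoc]
  exact Finset.sum_congr rfl fun j _ => by ring

lemma trace_conjT_mul_self_eq_zero {d : ℕ} (X : Matrix (Fin d) (Fin d) ℂ)
    (h : (Xᴴ * X).trace = 0) : X = 0 := by
  have h2 : ∑ j, ∑ i, Complex.normSq (X i j) = 0 := by
    have := h
    simp only [Matrix.trace, Matrix.diag, Matrix.mul_apply, conjTranspose_apply] at this
    have : ((∑ j, ∑ i, (Complex.normSq (X i j) : ℂ)) : ℂ) = 0 := by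
      rw [← this]
      exact Finset.sum_congr rfl fun j _ => Finset.sum_congr rfl fun i _ => by
        rw [Complex.normSq_eq_conj_mul_self]; rfl
    exact_mod_cast this
  ext i j
  have hnn : ∀ j ∈ Finset.univ, (0:ℝ) ≤ ∑ i, Complex.normSq (X i j) :=
    fun j _ => Finset.sum_nonneg fun i _ => Complex.normSq_nonneg _
  have := (Finset.sum_eq_zero_iff_of_nonneg hnn).mp h2 j (Finset.mem_univ j)
  have := (Finset.sum_eq_zero_iff_of_nonneg (fun i _ => Complex.normSq_nonneg (X i j))).mp this i (Finset.mem_univ i)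
  simpa using Complex.normSq_eq_zero.mp this

lemma star_dp {d : ℕ} (u v : Fin d → ℂ) :
    star v ⬝ᵥ u = (starRingEnd ℂ) (star u ⬝ᵥ v) := by
  simp [dotProduct, map_sum, mul_comm]

lemma trace_vmv_mul_vmv {d : ℕ} (u v : Fin d → ℂ) :
    (vecMulVec u (star u) * vecMulVec v (star v)).trace = ((‖star u ⬝ᵥ v‖^2 : ℝ) : ℂ) := by
  rw [trace_vmv_mul, vmv_mulVec, dotProduct_smul, star_dp]
  have h1 : ((‖star u ⬝ᵥ v‖^2 : ℝ) : ℂ) = (Complex.normSq (star u ⬝ᵥ v) : ℂ) := by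
    rw [Complex.sq_norm]
  rw [h1, Complex.normSq_eq_conj_mul_self]
  simp [smul_eq_mul]

/-- Exact linear state reconstruction from a SIC measurement:
`ρ = ∑ ξ, (⟨ψ ξ, ρ ψ ξ⟩ / d) • ((d+1) • |ψ ξ⟩⟨ψ ξ| - 1)` for every Hermitian `ρ`
with unit trace. -/
theorem stmt_8 (d : ℕ) (hd : 1 ≤ d) (ψ : Fin (d ^ 2) → Fin d → ℂ)
    (hunit : ∀ ξ, star (ψ ξ) ⬝ᵥ ψ ξ = 1)
    (hsic : ∀ ξ ζ, ‖star (ψ ξ) ⬝ᵥ ψ ζ‖ ^ 2 =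
      ((d : ℝ) * (if ξ = ζ then 1 else 0) + 1) / (d + 1)) :
    ∀ ρ : Matrix (Fin d) (Fin d) ℂ, ρ.IsHermitian → ρ.trace = 1 →
      ρ = ∑ ξ, ((star (ψ ξ) ⬝ᵥ (ρ *ᵥ ψ ξ)) / d) •
        (((d : ℂ) + 1) • vecMulVec (ψ ξ) (star (ψ ξ)) - 1) := by
  intro ρ _ htr
  set P : Fin (d ^ 2) → Matrix (Fin d) (Fin d) ℂ :=
    fun ξ => vecMulVec (ψ ξ) (star (ψ ξ)) with hP
  have hd0 : (d : ℂ) ≠ 0 := Nat.cast_ne_zero.mpr (by omega)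
  have hd1 : (d : ℂ) + 1 ≠ 0 := by
    have : ((d + 1 : ℕ) : ℂ) ≠ 0 := Nat.cast_ne_zero.mpr (by omega)
    push_cast at this; exact this
  -- Gram matrix entries
  have hG : ∀ ξ ζ, (P ξ * P ζ).trace =
      ((d : ℂ) * (if ξ = ζ then 1 else 0) + 1) / ((d : ℂ) + 1) := by
    intro ξ ζ
    rw [hP, trace_vmv_mul_vmv, hsic]
    split_ifs <;> push_cast <;> ring
  have htrP : ∀ ξ, (P ξ).trace = 1 := fun ξ => by rw [hP, trace_vmv]; exact hunit ξ
  -- the sum of all projectors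
  set S : Matrix (Fin d) (Fin d) ℂ := ∑ ξ, P ξ with hSdef
  have hPS : ∀ ξ, (P ξ * S).trace = (d : ℂ) := by
    intro ξ
    rw [hSdef, Matrix.mul_sum, trace_sum]
    have : ∀ ζ ∈ Finset.univ, (P ξ * P ζ).trace =
        ((d : ℂ) * (if ξ = ζ then 1 else 0) + 1) / ((d : ℂ) + 1) := fun ζ _ => hG ξ ζ
    rw [Finset.sum_congr rfl this, ← Finset.sum_div, Finset.sum_add_distrib,
      ← Finset.mul_sum, Finset.sum_ite_eq Finset.univ ξ (fun _ => (1:ℂ))]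
    simp only [Finset.mem_univ, if_true, Finset.sum_const, Finset.card_univ,
      Fintype.card_fin, nsmul_eq_mul, mul_one]
    push_cast
    field_simp
    ring
  have htrS : S.trace = (d : ℂ) ^ 2 := by
    rw [hSdef, trace_sum, Finset.sum_congr rfl fun ξ _ => htrP ξ]
    simp only [Finset.sum_const, Finset.card_univ, Fintype.card_fin, nsmul_eq_mul, mul_one]
    push_cast; ring
  have hSS : (S * S).trace = (d : ℂ) ^ 3 := by
    rw [show S * S = ∑ ξ, P ξ * S by rw [hSdef, Matrix.sum_mul], trace_sum,
      Finset.sum_congr rfl fun ξ _ => hPS ξ]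
    simp only [Finset.sum_const, Finset.card_univ, Fintype.card_fin, nsmul_eq_mul]
    push_cast; ring
  have hSh : Sᴴ = S := by
    rw [hSdef, conjTranspose_sum]
    refine Finset.sum_congr rfl fun ξ _ => ?_
    ext i j
    simp [hP, vecMulVec_apply, conjTranspose_apply, mul_comm]
  -- S = d • 1
  have hS : S = (d : ℂ) • 1 := by
    have hX : S - (d : ℂ) • 1 = 0 := by
      apply trace_conjT_mul_self_eq_zero
      have hXh : (S - (d : ℂ) • 1)ᴴ = S - (d : ℂ) • 1 := by
        rw [conjTranspose_sub, hSh, conjTranspose_smul]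
        simp
      rw [hXh]
      have expand : (S - (d : ℂ) • 1) * (S - (d : ℂ) • 1) =
          S * S - (d : ℂ) • S - (d : ℂ) • S + ((d : ℂ) * (d : ℂ)) • 1 := by
        simp only [sub_mul, mul_sub, Matrix.smul_mul, Matrix.mul_smul, Matrix.mul_one,
          Matrix.one_mul, smul_smul]
        abel
      rw [expand]
      simp only [trace_add, trace_sub, trace_smul, trace_one, smul_eq_mul,
        Fintype.card_fin, hSS, htrS]
      ring
    rw [← sub_eq_zero]; exact hX
  -- linear independence of the projectors
  have hLI : LinearIndependent ℂ P := by
    rw [Fintype.linearIndependent_iff]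
    intro a ha
    have key : ∀ ζ, (d : ℂ) * a ζ + ∑ ξ, a ξ = 0 := by
      intro ζ
      have h0 : (P ζ * ∑ ξ, a ξ • P ξ).trace = 0 := by rw [ha]; simp
      rw [Matrix.mul_sum] at h0
      simp only [Matrix.mul_smul, trace_smul, smul_eq_mul] at h0
      rw [trace_sum] at h0
      simp only [trace_smul, smul_eq_mul] at h0
      have h1 : ∑ ξ, a ξ * (P ζ * P ξ).trace
          = ((d : ℂ) * a ζ + ∑ ξ, a ξ) / ((d : ℂ) + 1) := by
        have : ∀ ξ ∈ Finset.univ, a ξ * (P ζ * P ξ).trace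
            = (a ξ * ((d : ℂ) * (if ζ = ξ then 1 else 0)) + a ξ) / ((d : ℂ) + 1) := by
          intro ξ _
          rw [hG ζ ξ]
          ring
        rw [Finset.sum_congr rfl this, ← Finset.sum_div, Finset.sum_add_distrib]
        congr 2
        rw [Finset.sum_congr rfl (fun ξ (_ : ξ ∈ Finset.univ) =>
          show a ξ * ((d : ℂ) * (if ζ = ξ then 1 else 0))
            = if ζ = ξ then (d : ℂ) * a ξ else 0 from by split_ifs <;> ring),
          Finset.sum_ite_eq Finset.univ ζ (fun ξ => (d : ℂ) * a ξ)]
        simp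
      rw [h1] at h0
      exact (div_eq_zero_iff.mp h0).resolve_right hd1
    have hsum : ∑ ξ, a ξ = 0 := by
      have hs := Finset.sum_congr rfl (fun ζ (_ : ζ ∈ Finset.univ) => key ζ)
      rw [Finset.sum_add_distrib, ← Finset.mul_sum, Finset.sum_const, Finset.card_univ,
        Fintype.card_fin, Finset.sum_const_zero] at hs
      have : ((d : ℂ) + (d ^ 2 : ℕ)) * ∑ ξ, a ξ = 0 := by
        rw [add_mul]; rw [nsmul_eq_mul] at hs; linear_combination hs
      have hne : (d : ℂ) + ((d ^ 2 : ℕ) : ℂ) ≠ 0 := by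
        push_cast
        have : (d : ℂ) + (d : ℂ) ^ 2 = (d : ℂ) * (1 + d) := by ring
        rw [this]
        exact mul_ne_zero hd0 (by rw [add_comm]; exact hd1)
      exact (mul_eq_zero.mp this).resolve_left hne
    intro ζ
    have := key ζ
    rw [hsum, add_zero] at this
    exact (mul_eq_zero.mp this).resolve_left hd0
  have hne : Nonempty (Fin (d ^ 2)) := ⟨⟨0, by positivity⟩⟩
  have hcard : Fintype.card (Fin (d ^ 2)) = Module.finrank ℂ (Matrix (Fin d) (Fin d) ℂ) := by
    rw [Module.finrank_matrix]
    simp [pow_two]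
  have hspan : Submodule.span ℂ (Set.range P) = ⊤ := by
    have b := basisOfLinearIndependentOfCardEqFinrank hLI hcard
    have hb : ⇑(basisOfLinearIndependentOfCardEqFinrank hLI hcard) = P :=
      coe_basisOfLinearIndependentOfCardEqFinrank hLI hcard
    rw [← hb]
    exact (basisOfLinearIndependentOfCardEqFinrank hLI hcard).span_eq
  -- the frame identity
  have main : ∀ A : Matrix (Fin d) (Fin d) ℂ,
      ((d : ℂ) + 1) • ∑ ξ, (P ξ * A).trace • P ξ
        = (d : ℂ) • A + ((d : ℂ) * A.trace) • 1 := by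
    intro A
    have hA : A ∈ Submodule.span ℂ (Set.range P) := hspan ▸ Submodule.mem_top
    induction hA using Submodule.span_induction with
    | mem x hx =>
      obtain ⟨ζ, rfl⟩ := hx
      rw [Finset.smul_sum]
      have step : ∀ ξ ∈ Finset.univ, ((d : ℂ) + 1) • ((P ξ * P ζ).trace • P ξ)
          = (if ξ = ζ then (d : ℂ) • P ξ else 0) + P ξ := by
        intro ξ _
        rw [hG ξ ζ, smul_smul, mul_div_cancel₀ _ hd1]
        split_ifs <;> simp [add_smul]
      rw [Finset.sum_congr rfl step, Finset.sum_add_distrib,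
        Finset.sum_ite_eq' Finset.univ ζ (fun ξ => (d : ℂ) • P ξ)]
      simp only [Finset.mem_univ, if_true, ← hSdef, hS, htrP, mul_one]
    | zero => simp
    | add x y _ _ hx hy =>
      have step : ∀ ξ ∈ Finset.univ, (P ξ * (x + y)).trace • P ξ
          = (P ξ * x).trace • P ξ + (P ξ * y).trace • P ξ := fun ξ _ => by
        rw [Matrix.mul_add, trace_add, add_smul]
      rw [Finset.sum_congr rfl step, Finset.sum_add_distrib, smul_add, hx, hy, trace_add]
      simp only [smul_add, mul_add, add_smul]
      abel
    | smul c x _ hx =>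
      have step : ∀ ξ ∈ Finset.univ, (P ξ * (c • x)).trace • P ξ
          = c • ((P ξ * x).trace • P ξ) := fun ξ _ => by
        rw [Matrix.mul_smul, trace_smul, smul_eq_mul, mul_smul]
      rw [Finset.sum_congr rfl step, ← Finset.smul_sum, smul_comm ((d : ℂ) + 1) c, hx,
        trace_smul]
      simp only [smul_add, smul_smul, smul_eq_mul]
      congr 1
      · rw [mul_comm]
      · congr 1
        ring
  -- sum of probabilities
  have hc : ∑ ξ, (P ξ * ρ).trace = (d : ℂ) := by
    rw [← trace_sum, ← Matrix.sum_mul, ← hSdef, hS, Matrix.smul_mul, trace_smul,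
      Matrix.one_mul, htr]
    simp
  -- conclude
  have hrewsum : ∑ ξ, ((star (ψ ξ) ⬝ᵥ (ρ *ᵥ ψ ξ)) / (d : ℂ)) • (((d : ℂ) + 1) • P ξ - 1)
      = ∑ ξ, ((P ξ * ρ).trace / (d : ℂ)) • (((d : ℂ) + 1) • P ξ - 1) :=
    Finset.sum_congr rfl fun ξ _ => by rw [hP, trace_vmv_mul]
  rw [hrewsum]
  apply smul_right_injective (Matrix (Fin d) (Fin d) ℂ) hd0
  show (d : ℂ) • ρ = (d : ℂ) • ∑ ξ, ((P ξ * ρ).trace / (d : ℂ)) • (((d : ℂ) + 1) • P ξ - 1)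
  rw [Finset.smul_sum]
  simp only [smul_smul, mul_div_cancel₀ _ hd0]
  have expand : ∀ ξ ∈ Finset.univ, ((P ξ * ρ).trace) • (((d : ℂ) + 1) • P ξ - 1)
      = ((d : ℂ) + 1) • ((P ξ * ρ).trace • P ξ) - (P ξ * ρ).trace • 1 := by
    intro ξ _
    rw [smul_sub, smul_comm]
  rw [Finset.sum_congr rfl expand, Finset.sum_sub_distrib, ← Finset.smul_sum,
    main ρ, htr, ← Finset.sum_smul, hc]
  simp
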